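/- With the hypotheses above (generators mapping to generators of a free base semigroup D), every relation among the generators S1 ×_T S2 of the fiber product semigroup P1 ×_D P2 is generated by relations lifted from P1, relations lifted from P2, and the swap relations (a,c) + (b,d) = (b,c) + (a,d), where a,b ∈ S1, c,d ∈ S2 satisfy π1(a) = π2(c) = π1(b) = π2(d). -/
import Mathlib


/-- A commutative monoid `D` is free on `T` if summation of multisets from `T` is bijective. -/
def IsFreeOn {D : Type*} [AddCommMonoid D] (T : Set D) : Prop :=
  Function.Bijective (fun m : Multiset T => (m.map (Subtype.val)).sum)

private lemma fst_msum {M₁ M₂ : Type*} [AddCommMonoid M₁] [AddCommMonoid M₂]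
    (s : Multiset (M₁ × M₂)) : s.sum.1 = (s.map Prod.fst).sum := by
  induction s using Multiset.induction with
  | empty => simp
  | cons a s ih => simp [ih]

private lemma snd_msum {M₁ M₂ : Type*} [AddCommMonoid M₁] [AddCommMonoid M₂]
    (s : Multiset (M₁ × M₂)) : s.sum.2 = (s.map Prod.snd).sum := by
  induction s using Multiset.induction with
  | empty => simp
  | cons a s ih => simp [ih]

/-- With generators mapping to generators of a free base semigroup,
every relation among the generators `S₁ ×_T S₂` of the fiber product semigroup is
generated by relations lifted from `M₁`, relations lifted from `M₂`, and the swap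
relations `(a,c) + (b,d) = (b,c) + (a,d)` for `a, b ∈ S₁`, `c, d ∈ S₂` with
`π₁ a = π₂ c = π₁ b = π₂ d`.  Formally: the congruence on the free commutative monoid on
the fiber generators generated by these relations coincides with the kernel congruence of
the evaluation map. -/
theorem fiberProduct_semigroup_relations
    {M₁ M₂ D : Type*} [AddCommMonoid M₁] [AddCommMonoid M₂] [AddCommMonoid D]
    (π₁ : M₁ →+ D) (π₂ : M₂ →+ D)
    (S₁ : Set M₁) (S₂ : Set M₂) (T : Set D)
    (hS₁ : AddSubmonoid.closure S₁ = ⊤) (hS₂ : AddSubmonoid.closure S₂ = ⊤)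
    (hT : AddSubmonoid.closure T = ⊤)
    (hπ₁ : π₁ '' S₁ ⊆ T) (hπ₂ : π₂ '' S₂ ⊆ T)
    (hfree : IsFreeOn T)
    -- the set of fiber-product generators
    (G : Set (M₁ × M₂))
    (hG : G = {p : M₁ × M₂ | p.1 ∈ S₁ ∧ p.2 ∈ S₂ ∧ π₁ p.1 = π₂ p.2})
    -- the generating relations
    (rel : Multiset G → Multiset G → Prop)
    (hrel : ∀ x y, rel x y ↔
      -- swap relations
      ((∃ a b c d : G, a.val.1 = c.val.1 ∧ a.val.2 = d.val.2 ∧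
          b.val.1 = d.val.1 ∧ b.val.2 = c.val.2 ∧
          π₁ a.val.1 = π₁ b.val.1 ∧
          x = {a, b} ∧ y = {c, d}) ∨
      -- relations lifted from M₁ (the second components are matched unchanged)
        (x.map (fun g => g.val.2) = y.map (fun g => g.val.2) ∧
          (x.map (fun g => g.val.1)).sum = (y.map (fun g => g.val.1)).sum) ∨
      -- relations lifted from M₂ (the first components are matched unchanged)
        (x.map (fun g => g.val.1) = y.map (fun g => g.val.1) ∧
          (x.map (fun g => g.val.2)).sum = (y.map (fun g => g.val.2)).sum))) :
    ∀ x y : Multiset G,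
      (addConGen rel) x y ↔ (x.map Subtype.val).sum = (y.map Subtype.val).sum := by
  -- membership info
  have hmem : ∀ g : G, g.val.1 ∈ S₁ ∧ g.val.2 ∈ S₂ ∧ π₁ g.val.1 = π₂ g.val.2 := by
    intro g; exact (Set.ext_iff.mp hG g.val).mp g.property
  intro x y
  constructor
  · intro h
    induction h with
    | of u v huv =>
      rw [hrel] at huv
      rcases huv with ⟨a, b, c, d, h1, h2, h3, h4, h5, hx, hy⟩ | ⟨h1, h2⟩ | ⟨h1, h2⟩
      · subst hx; subst hy
        simp only [Multiset.insert_eq_cons, Multiset.map_cons, Multiset.map_singleton,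
          Multiset.sum_cons, Multiset.sum_singleton]
        ext
        · simp [h1, h3]
        · simp only [Prod.snd_add, h2, h4]; exact add_comm _ _
      · ext
        · rw [fst_msum, fst_msum, Multiset.map_map, Multiset.map_map]
          exact h2
        · rw [snd_msum, snd_msum, Multiset.map_map, Multiset.map_map,
            show ((Prod.snd ∘ Subtype.val : G → M₂)) = fun g => g.val.2 from rfl, h1]
      · ext
        · rw [fst_msum, fst_msum, Multiset.map_map, Multiset.map_map,
            show ((Prod.fst ∘ Subtype.val : G → M₁)) = fun g => g.val.1 from rfl, h1]
        · rw [snd_msum, snd_msum, Multiset.map_map, Multiset.map_map]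
          exact h2
    | refl u => rfl
    | symm _ ih => exact ih.symm
    | trans _ _ ih1 ih2 => exact ih1.trans ih2
    | add _ _ ih1 ih2 => simp only [Multiset.map_add, Multiset.sum_add, ih1, ih2]
  · intro hsum
    -- sums of first and second components agree
    have h1 : (x.map (fun g : G => g.val.1)).sum = (y.map (fun g : G => g.val.1)).sum := by
      have := congrArg Prod.fst hsum
      rwa [fst_msum, fst_msum, Multiset.map_map, Multiset.map_map] at this
    have h2 : (x.map (fun g : G => g.val.2)).sum = (y.map (fun g : G => g.val.2)).sum := by
      have := congrArg Prod.snd hsum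
      rwa [snd_msum, snd_msum, Multiset.map_map, Multiset.map_map] at this
    -- labels
    set ℓ : G → T := fun g => ⟨π₁ g.val.1, hπ₁ ⟨g.val.1, (hmem g).1, rfl⟩⟩ with hℓ
    have hlab : x.map ℓ = y.map ℓ := by
      apply hfree.injective
      show ((x.map ℓ).map Subtype.val).sum = ((y.map ℓ).map Subtype.val).sum
      rw [Multiset.map_map, Multiset.map_map]
      have e : ∀ z : Multiset G,
          (z.map (Subtype.val ∘ ℓ)).sum = π₁ (z.map (fun g : G => g.val.1)).sum := by
        intro z
        rw [map_multiset_sum, Multiset.map_map]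
        rfl
      rw [e, e, h1]
    have hRel : Multiset.Rel (fun a b : G => π₁ a.val.1 = π₁ b.val.1) x y := by
      have := (Multiset.rel_map (p := (· = · : T → T → Prop))
        (s := x) (t := y) (f := ℓ) (g := ℓ)).mp (by rw [Multiset.rel_eq]; exact hlab)
      refine this.mono ?_
      intro a _ b _ hab
      exact congrArg Subtype.val hab
    -- build the repaired multiset z : seconds from x, firsts from y
    have repair : ∀ u v : Multiset G,
        Multiset.Rel (fun a b : G => π₁ a.val.1 = π₁ b.val.1) u v →
        ∃ z : Multiset G, z.map (fun g => g.val.2) = u.map (fun g => g.val.2) ∧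
          z.map (fun g => g.val.1) = v.map (fun g => g.val.1) := by
      intro u v h
      induction h with
      | zero => exact ⟨0, by simp⟩
      | @cons a b as bs hab _ ih =>
        obtain ⟨z, hz1, hz2⟩ := ih
        refine ⟨(⟨(b.val.1, a.val.2), ?_⟩ : G) ::ₘ z, by simp [hz1], by simp [hz2]⟩
        exact (Set.ext_iff.mp hG _).mpr
          ⟨(hmem b).1, (hmem a).2.1, by rw [← hab]; exact (hmem a).2.2⟩
    obtain ⟨z, hz1, hz2⟩ := repair x y hRel
    have step1 : (addConGen rel) x z := by
      apply AddConGen.Rel.of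
      rw [hrel]
      right; left
      constructor
      · exact hz1.symm
      · rw [hz2, h1]
    have step2 : (addConGen rel) z y := by
      apply AddConGen.Rel.of
      rw [hrel]
      right; right
      exact ⟨hz2, by rw [hz1, h2]⟩
    exact (addConGen rel).trans step1 step2
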